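/- Let A be a finite alphabet and Σ ⊆ A^{ℤ×ℤ} an effective set of colourings. Define the dyadic encoding Φ(Σ) ⊆ (A × A)^{ℤ×ℤ} as the set of configurations z : ℤ × ℤ → A × A such that (i) the first-component configuration π₁ ∘ z belongs to Σ, and (ii) the second component satisfies π₂(z(n+1, 2k)) = π₁(z(n, k)) and π₂(z(n+1, 2k+1)) = π₂(z(n, k)) for all n, k ∈ ℤ. Then Φ(Σ) is an effective set of colourings over the alphabet A × A. -/

import Mathlib

/-- The support of size `n`: `𝕌_n = {(p,q) : p ≤ n-1, q ≤ 2^p - 1}` (natural subtraction). -/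
def U (n : ℕ) : Set (ℕ × ℕ) := {pq | pq.1 ≤ n - 1 ∧ pq.2 ≤ 2 ^ pq.1 - 1}

instance (n : ℕ) : DecidablePred (· ∈ U n) := fun pq =>
  inferInstanceAs (Decidable (pq.1 ≤ n - 1 ∧ pq.2 ≤ 2 ^ pq.1 - 1))

instance (n : ℕ) : Fintype (U n) :=
  Fintype.ofFinset ((Finset.range (n + 1) ×ˢ Finset.range (2 ^ (n + 1))).filter (· ∈ U n))
    (by
      intro pq
      simp only [Finset.mem_filter, Finset.mem_product, Finset.mem_range]
      constructor
      · exact fun h => h.2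
      · intro h
        obtain ⟨h1, h2⟩ := h
        refine ⟨⟨by omega, ?_⟩, ⟨h1, h2⟩⟩
        have hp : 2 ^ pq.1 ≤ 2 ^ (n + 1) := Nat.pow_le_pow_right (by norm_num) (by omega)
        have : 0 < 2 ^ pq.1 := Nat.pow_pos (by norm_num)
        omega)

/-- A pattern over alphabet `A`: a size `n+1 ≥ 1` together with a colouring of `𝕌_{n+1}`. -/
def Pattern (A : Type) : Type := Σ n : ℕ, (U (n + 1) → A)

/-- The size of a pattern (always ≥ 1). -/
def Pattern.size {A : Type} (P : Pattern A) : ℕ := P.1 + 1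

instance {A : Type} [Encodable A] (n : ℕ) : Encodable (↥(U n) → A) :=
  Encodable.fintypeArrowOfEncodable

instance {A : Type} [Encodable A] : Encodable (Pattern A) :=
  inferInstanceAs (Encodable (Σ n : ℕ, (U (n + 1) → A)))

/-- `P` (with support `𝕌_n`) appears in the configuration `x` at position `(n₀, k₀)`. -/
def AppearsAt {A : Type} {n : ℕ} (P : U n → A) (x : ℤ × ℤ → A) (g : ℤ × ℤ) : Prop :=
  ∀ pq : U n, x (g.1 + (pq.1.1 : ℤ), 2 ^ pq.1.1 * g.2 + (pq.1.2 : ℤ)) = P pq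

/-- The pattern `P` appears somewhere in the configuration `x`. -/
def Pattern.Appears {A : Type} (P : Pattern A) (x : ℤ × ℤ → A) : Prop :=
  ∃ g : ℤ × ℤ, AppearsAt P.2 x g

/-- The set of colourings avoiding every pattern of `F`. -/
def colourings {A : Type} (F : Set (Pattern A)) : Set ((ℤ × ℤ) → A) :=
  {x | ∀ P ∈ F, ¬ P.Appears x}

/-- A set of colourings is of finite type (CFT). -/
def IsCFT {A : Type} (S : Set ((ℤ × ℤ) → A)) : Prop :=
  ∃ F : Set (Pattern A), F.Finite ∧ S = colourings F

/-- A set of colourings is sofic: letter-to-letter projection of a CFT. -/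
def IsSofic {A : Type} (S : Set ((ℤ × ℤ) → A)) : Prop :=
  ∃ (B : Type) (_ : Fintype B) (S' : Set ((ℤ × ℤ) → B)) (φ : B → A),
    IsCFT S' ∧ S = (fun w => φ ∘ w) '' S'

/-- A set of colourings is effective: defined by a set of forbidden patterns whose
set of codes (under the standard encoding of patterns) is recursively enumerable. -/
def IsEffective {A : Type} [Encodable A] (S : Set ((ℤ × ℤ) → A)) : Prop :=
  ∃ F : Set (Pattern A),
    REPred (fun c : ℕ => ∃ P ∈ F, Encodable.encode P = c) ∧ S = colourings F

/-- The dyadic encoding of a set of colourings `S`: configurations over `A × A` whose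
first component lies in `S` and whose second component is the dyadic encoding of the
first one, i.e. `π₂(z(n+1, 2k)) = π₁(z(n, k))` and `π₂(z(n+1, 2k+1)) = π₂(z(n, k))`. -/
def DyadicImage {A : Type} (S : Set ((ℤ × ℤ) → A)) : Set ((ℤ × ℤ) → A × A) :=
  {z | (fun g => (z g).1) ∈ S ∧
    ∀ n k : ℤ, (z (n + 1, 2 * k)).2 = (z (n, k)).1 ∧ (z (n + 1, 2 * k + 1)).2 = (z (n, k)).2}


/-! ### Auxiliary machinery -/

section Aux

open Encodable

/-- list of (position-tagged) encoded values of `f` in canonical order -/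
def fvals {β : Type} [Encodable β] {n : ℕ} (f : U n → β) : List ℕ :=
  List.ofFn fun i : Fin (Fintype.card (U n)) =>
    Nat.pair i.val (Encodable.encode (f (Encodable.fintypeEquivFin.symm i)))

theorem encode_list_map {β : Type} [Encodable β] (l : List β) :
    Encodable.encode l = Encodable.encode (l.map Encodable.encode) := by
  induction l with
  | nil => rfl
  | cons a l ih => simp [Encodable.encode_list_cons, ih]

theorem encode_fun_eq {β : Type} [Encodable β] {n : ℕ} (f : U n → β) :
    Encodable.encode f = Encodable.encode (fvals f) := by
  set m := Fintype.card (U n) with hm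
  have h1 : Encodable.encode f
      = @Encodable.encode (Fin m → Σ _ : Fin m, β) Encodable.finArrow
          (fun i => ⟨i, f (Encodable.fintypeEquivFin.symm i)⟩) := rfl
  have h2 : @Encodable.encode (Fin m → Σ _ : Fin m, β) Encodable.finArrow
          (fun i => ⟨i, f (Encodable.fintypeEquivFin.symm i)⟩)
      = Encodable.encode ((List.Vector.ofFn
          (fun i => (⟨i, f (Encodable.fintypeEquivFin.symm i)⟩ : Σ _ : Fin m, β))).toList) := rfl
  rw [h1, h2, List.Vector.toList_ofFn, encode_list_map, List.map_ofFn]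
  rfl

theorem sum_range_two_pow (k : ℕ) : ∑ i ∈ Finset.range k, 2^i = 2^k - 1 := by
  induction k with
  | zero => simp
  | succ k ih =>
    rw [Finset.sum_range_succ, ih, pow_succ]
    have : 0 < 2^k := Nat.pow_pos (by norm_num)
    omega

def UEquiv (n : ℕ) : U (n+1) ≃ Σ p : Fin (n+1), Fin (2^(p : ℕ)) where
  toFun u := ⟨⟨u.1.1, by have := u.2.1; omega⟩,
    ⟨u.1.2, by
      show u.1.2 < 2 ^ u.1.1
      have h := u.2.2
      have : 0 < 2^u.1.1 := Nat.pow_pos (by norm_num)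
      omega⟩⟩
  invFun s := ⟨(s.1.1, s.2.1), by
    refine ⟨?_, ?_⟩
    · have := s.1.2; show s.1.1 ≤ n + 1 - 1; omega
    · have := s.2.2; show s.2.1 ≤ 2 ^ s.1.1 - 1; omega⟩
  left_inv u := rfl
  right_inv s := rfl

theorem card_U (n : ℕ) : Fintype.card (U (n+1)) = 2^(n+1) - 1 := by
  rw [Fintype.card_congr (UEquiv n)]
  rw [Fintype.card_sigma]
  simp only [Fintype.card_fin]
  rw [Fin.sum_univ_eq_sum_range (fun i => 2^i) (n+1), sum_range_two_pow]

theorem fvals_length {β : Type} [Encodable β] {n : ℕ} (f : U n → β) :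
    (fvals f).length = Fintype.card (U n) := by simp [fvals]

theorem fvals_getD {β : Type} [Encodable β] {n : ℕ} (f : U n → β) (j : ℕ)
    (hj : j < Fintype.card (U n)) :
    (fvals f).getD j 0
      = Nat.pair j (Encodable.encode (f (Encodable.fintypeEquivFin.symm ⟨j, hj⟩))) := by
  have hl : j < (fvals f).length := by rw [fvals_length]; exact hj
  rw [List.getD_eq_getElem _ _ hl]
  simp [fvals]

theorem fvals_fst {β : Type} [Encodable β] {n : ℕ} (f : U n → β × β) :
    fvals (fun u => (f u).1)
      = (fvals f).map (fun x => Nat.pair x.unpair.1 x.unpair.2.unpair.1) := by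
  apply List.ext_getElem
  · simp [fvals]
  · intro j h1 h2
    have he : ∀ x : β × β, Nat.unpair (Encodable.encode x)
        = (Encodable.encode x.1, Encodable.encode x.2) := by
      intro x
      rw [show Encodable.encode x = Nat.pair (Encodable.encode x.1) (Encodable.encode x.2)
        from Encodable.encode_prod_val x.1 x.2, Nat.unpair_pair]
    simp only [fvals, List.getElem_ofFn, List.getElem_map, Nat.unpair_pair, he]

theorem exists_fun_of_list {β : Type} [Encodable β] {n : ℕ} (l : List ℕ)
    (hlen : l.length = Fintype.card (U n))
    (hent : ∀ j, j < l.length → (l.getD j 0).unpair.1 = j ∧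
      ∃ b : β, Encodable.encode b = (l.getD j 0).unpair.2) :
    ∃ f : U n → β, fvals f = l := by
  have hidx : ∀ u : U n,
      ((Encodable.fintypeEquivFin u : Fin (Fintype.card (U n))) : ℕ) < l.length := by
    intro u; rw [hlen]; exact (Encodable.fintypeEquivFin u).isLt
  refine ⟨fun u => ((hent _ (hidx u)).2).choose, ?_⟩
  apply List.ext_getElem
  · rw [fvals_length, hlen]
  · intro j h1 h2
    have hj : j < Fintype.card (U n) := hlen ▸ h2
    rw [← List.getD_eq_getElem _ 0 h1, ← List.getD_eq_getElem _ 0 h2]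
    rw [fvals_getD _ j hj]
    set u := (Encodable.fintypeEquivFin (α := U n)).symm ⟨j, hj⟩ with hu
    have hval : ((Encodable.fintypeEquivFin u : Fin (Fintype.card (U n))) : ℕ) = j := by
      rw [hu, Equiv.apply_symm_apply]
    have hspec := ((hent _ (hidx u)).2).choose_spec
    rw [hspec]
    have h3 := (hent j h2).1
    calc Nat.pair j (l.getD (↑(Encodable.fintypeEquivFin u)) 0).unpair.2
        = Nat.pair (l.getD j 0).unpair.1 (l.getD j 0).unpair.2 := by rw [hval, h3]
      _ = l.getD j 0 := Nat.pair_unpair _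

/-- the first-component projection of a pattern over a product alphabet -/
def projPat {A : Type} (Q : Pattern (A × A)) : Pattern A := ⟨Q.1, fun u => (Q.2 u).1⟩

theorem encode_pattern {β : Type} [Encodable β] (Q : Pattern β) :
    Encodable.encode Q = Nat.pair Q.1 (Encodable.encode (fvals Q.2)) := by
  obtain ⟨n, f⟩ := Q
  have h : Encodable.encode (⟨n, f⟩ : Pattern β)
      = Nat.pair n (Encodable.encode f) := rfl
  exact h.trans (congrArg (Nat.pair n) (encode_fun_eq f))

theorem encode_projPat {A : Type} [Encodable A] (Q : Pattern (A × A)) :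
    Encodable.encode (projPat Q) = Nat.pair Q.1
      (Encodable.encode ((fvals Q.2).map (fun x => Nat.pair x.unpair.1 x.unpair.2.unpair.1))) := by
  obtain ⟨n, f⟩ := Q
  rw [encode_pattern]
  show Nat.pair n _ = Nat.pair n _
  rw [show (projPat ⟨n, f⟩).2 = fun u => (f u).1 from rfl]
  rw [show (⟨n, f⟩ : Pattern (A × A)).snd = f from rfl]
  exact congrArg (fun t => Nat.pair n (Encodable.encode t)) (fvals_fst f)

end Aux

section Aux2

variable {A : Type} [Fintype A] [DecidableEq A] [Encodable A]

/-- codes of elements of `A × A` -/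
def elemCodes (A : Type) [Fintype A] [DecidableEq A] [Encodable A] : Finset ℕ :=
  Finset.univ.image (fun ab : A × A => Encodable.encode ab)

def u00 : U 2 := ⟨(0, 0), by refine ⟨?_, ?_⟩ <;> norm_num⟩
def u10 : U 2 := ⟨(1, 0), by refine ⟨?_, ?_⟩ <;> norm_num⟩
def u11 : U 2 := ⟨(1, 1), by refine ⟨?_, ?_⟩ <;> norm_num⟩

/-- size-2 patterns over `A × A` violating the dyadic local rule -/
def Bad2 (A : Type) : Set (U 2 → A × A) :=
  {f | ¬ ((f u10).2 = (f u00).1 ∧ (f u11).2 = (f u00).2)}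

instance : DecidablePred (· ∈ Bad2 A) := fun f =>
  inferInstanceAs (Decidable ¬ ((f u10).2 = (f u00).1 ∧ (f u11).2 = (f u00).2))

/-- codes of the bad size-2 patterns -/
def badCodes (A : Type) [Fintype A] [DecidableEq A] [Encodable A] : Finset ℕ :=
  ((Finset.univ : Finset (U 2 → A × A)).filter (· ∈ Bad2 A)).image
    (fun f => Encodable.encode (⟨1, f⟩ : Pattern (A × A)))

def bB (A : Type) [Fintype A] [DecidableEq A] [Encodable A] : ℕ → Bool :=
  fun c => decide (c ∈ badCodes A)

theorem bB_iff (c : ℕ) : bB A c = true ↔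
    ∃ f ∈ Bad2 A, Encodable.encode (⟨1, f⟩ : Pattern (A × A)) = c := by
  simp [bB, badCodes, Finset.mem_image, Finset.mem_filter]

/-- validity check: `c` is the code of some pattern over `A × A` -/
def vB (A : Type) [Fintype A] [DecidableEq A] [Encodable A] : ℕ → Bool := fun c =>
  decide ((Denumerable.ofNat (List ℕ) c.unpair.2).length = 2 ^ (c.unpair.1 + 1) - 1) &&
  (List.range (Denumerable.ofNat (List ℕ) c.unpair.2).length).foldr
    (fun j r =>
      (decide (((Denumerable.ofNat (List ℕ) c.unpair.2).getD j 0).unpair.1 = j ∧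
        ((Denumerable.ofNat (List ℕ) c.unpair.2).getD j 0).unpair.2 ∈ elemCodes A)) && r)
    true

theorem foldr_all (p : ℕ → Bool) (L : List ℕ) :
    (L.foldr (fun j r => p j && r) true = true) ↔ ∀ j ∈ L, p j = true := by
  induction L with
  | nil => simp
  | cons a L ih => simp [ih]

theorem vB_iff (c : ℕ) : vB A c = true ↔ ∃ Q : Pattern (A × A), Encodable.encode Q = c := by
  constructor
  · intro h
    unfold vB at h
    rw [Bool.and_eq_true, decide_eq_true_eq] at h
    obtain ⟨hlen, hfold⟩ := h
    set l := Denumerable.ofNat (List ℕ) c.unpair.2 with hl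
    have hall := (foldr_all _ _).1 hfold
    have hent : ∀ j, j < l.length → (l.getD j 0).unpair.1 = j ∧
        ∃ b : A × A, Encodable.encode b = (l.getD j 0).unpair.2 := by
      intro j hj
      have := hall j (List.mem_range.mpr hj)
      rw [decide_eq_true_eq] at this
      obtain ⟨h1, h2⟩ := this
      refine ⟨h1, ?_⟩
      simpa [elemCodes, Finset.mem_image] using h2
    obtain ⟨f, hf⟩ := exists_fun_of_list (n := c.unpair.1 + 1) l
      (by rw [hlen, card_U]) hent
    refine ⟨⟨c.unpair.1, f⟩, ?_⟩
    refine (encode_pattern (⟨c.unpair.1, f⟩ : Pattern (A × A))).trans ?_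
    show Nat.pair c.unpair.1 (Encodable.encode (fvals f)) = c
    rw [hf, hl, Denumerable.encode_ofNat, Nat.pair_unpair]
  · rintro ⟨Q, rfl⟩
    obtain ⟨n, f⟩ := Q
    refine (congrArg (fun t => vB A t = true) (encode_pattern (⟨n, f⟩ : Pattern (A × A)))).mpr ?_
    show vB A (Nat.pair n (Encodable.encode (fvals ((⟨n, f⟩ : Pattern (A × A)).snd)))) = true
    rw [show (⟨n, f⟩ : Pattern (A × A)).snd = f from rfl]
    unfold vB
    rw [Nat.unpair_pair]
    simp only []
    rw [Denumerable.ofNat_encode, Bool.and_eq_true, decide_eq_true_eq]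
    have hlen : (fvals f).length = 2 ^ (n + 1) - 1 := by rw [fvals_length, card_U]
    refine ⟨hlen, ?_⟩
    rw [foldr_all]
    intro j hj
    rw [List.mem_range] at hj
    have hj' : j < Fintype.card (U (n + 1)) := by rw [← fvals_length f]; exact hj
    rw [decide_eq_true_eq]
    rw [fvals_getD f j hj', Nat.unpair_pair]
    exact ⟨rfl, by simp [elemCodes, Finset.mem_image]⟩

/-- code-level projection map -/
def gN : ℕ → ℕ := fun c =>
  Nat.pair c.unpair.1
    (Encodable.encode ((Denumerable.ofNat (List ℕ) c.unpair.2).map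
      (fun x => Nat.pair x.unpair.1 x.unpair.2.unpair.1)))

theorem gN_encode (Q : Pattern (A × A)) :
    gN (Encodable.encode Q) = Encodable.encode (projPat Q) := by
  rw [encode_pattern, encode_projPat]
  unfold gN
  rw [Nat.unpair_pair]
  simp only []
  rw [Denumerable.ofNat_encode]

end Aux2


section Aux3

/-- the lifted forbidden set -/
def LiftF {A : Type} (F : Set (Pattern A)) : Set (Pattern (A × A)) :=
  (Sigma.mk 1 '' Bad2 A) ∪ {Q | projPat Q ∈ F}

theorem dyadic_colourings {A : Type} (F : Set (Pattern A)) :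
    DyadicImage (colourings F) = colourings (LiftF F) := by
  ext z
  constructor
  · rintro ⟨h1, h2⟩ P hP hap
    obtain ⟨g, hg⟩ := hap
    rcases hP with hbad | hproj
    · obtain ⟨f, hf, rfl⟩ := hbad
      apply hf
      have e00 : z (g.1 + ((0 : ℕ) : ℤ), 2 ^ (0 : ℕ) * g.2 + ((0 : ℕ) : ℤ)) = f u00 := hg u00
      have e10 : z (g.1 + ((1 : ℕ) : ℤ), 2 ^ (1 : ℕ) * g.2 + ((0 : ℕ) : ℤ)) = f u10 := hg u10
      have e11 : z (g.1 + ((1 : ℕ) : ℤ), 2 ^ (1 : ℕ) * g.2 + ((1 : ℕ) : ℤ)) = f u11 := hg u11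
      have i00 : z (g.1 + ((0 : ℕ) : ℤ), 2 ^ (0 : ℕ) * g.2 + ((0 : ℕ) : ℤ)) = z (g.1, g.2) := by
        norm_num
      have i10 : z (g.1 + ((1 : ℕ) : ℤ), 2 ^ (1 : ℕ) * g.2 + ((0 : ℕ) : ℤ))
          = z (g.1 + 1, 2 * g.2) := by norm_num
      have i11 : z (g.1 + ((1 : ℕ) : ℤ), 2 ^ (1 : ℕ) * g.2 + ((1 : ℕ) : ℤ))
          = z (g.1 + 1, 2 * g.2 + 1) := by norm_num
      rw [i00] at e00
      rw [i10] at e10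
      rw [i11] at e11
      have r := h2 g.1 g.2
      rw [e00, e10, e11] at r
      exact r
    · exact h1 (projPat P) hproj ⟨g, fun u => congrArg Prod.fst (hg u)⟩
  · intro hz
    constructor
    · intro P hP hap
      obtain ⟨g, hg⟩ := hap
      set Q : Pattern (A × A) :=
        ⟨P.1, fun u => z (g.1 + (u.1.1 : ℤ), 2 ^ u.1.1 * g.2 + (u.1.2 : ℤ))⟩ with hQ
      have hQF : Q ∈ LiftF F := by
        right
        show projPat Q ∈ F
        have : projPat Q = P := by
          obtain ⟨n, Pf⟩ := P
          apply congrArg (Sigma.mk n)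
          funext u
          exact hg u
        rw [this]
        exact hP
      exact hz Q hQF ⟨g, fun u => rfl⟩
    · intro n k
      set f : U 2 → A × A :=
        fun u => z (n + (u.1.1 : ℤ), 2 ^ u.1.1 * k + (u.1.2 : ℤ)) with hfdef
      have happ : Pattern.Appears (⟨1, f⟩ : Pattern (A × A)) z := ⟨(n, k), fun u => rfl⟩
      have hnb : f ∉ Bad2 A := by
        intro hf
        exact hz ⟨1, f⟩ (Or.inl ⟨f, hf, rfl⟩) happ
      have hrel : (f u10).2 = (f u00).1 ∧ (f u11).2 = (f u00).2 := by
        by_contra hc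
        exact hnb hc
      have i00 : f u00 = z (n, k) := by
        show z (n + ((0 : ℕ) : ℤ), 2 ^ (0 : ℕ) * k + ((0 : ℕ) : ℤ)) = z (n, k)
        norm_num
      have i10 : f u10 = z (n + 1, 2 * k) := by
        show z (n + ((1 : ℕ) : ℤ), 2 ^ (1 : ℕ) * k + ((0 : ℕ) : ℤ)) = z (n + 1, 2 * k)
        norm_num
      have i11 : f u11 = z (n + 1, 2 * k + 1) := by
        show z (n + ((1 : ℕ) : ℤ), 2 ^ (1 : ℕ) * k + ((1 : ℕ) : ℤ)) = z (n + 1, 2 * k + 1)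
        norm_num
      rw [i00, i10, i11] at hrel
      exact hrel

end Aux3


section Aux4

variable {A : Type} [Fintype A] [DecidableEq A] [Encodable A]

theorem primrec_mem_list : ∀ L : List ℕ, PrimrecPred (fun c : ℕ => c ∈ L)
  | [] => Primrec.primrecPred ((Primrec.const false).of_eq (fun c => by simp))
  | a :: L => by
    have hEq : PrimrecPred fun c : ℕ => c = a :=
      Primrec.eq.comp Primrec.id (Primrec.const a)
    exact (hEq.or (primrec_mem_list L)).of_eq (fun c => by simp [List.mem_cons])

theorem primrec_mem_finset (s : Finset ℕ) : PrimrecPred (fun c : ℕ => c ∈ s) :=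
  (primrec_mem_list s.toList).of_eq (fun c => by simp)

theorem primrec_bB : Primrec (bB A) :=
  PrimrecPred.decide (primrec_mem_finset (badCodes A))

theorem primrec_vB : Primrec (vB A) := by
  have hu1 : Primrec fun c : ℕ => c.unpair.1 := Primrec.fst.comp Primrec.unpair
  have hu2 : Primrec fun c : ℕ => c.unpair.2 := Primrec.snd.comp Primrec.unpair
  have hlist : Primrec fun c : ℕ => Denumerable.ofNat (List ℕ) c.unpair.2 :=
    (Primrec.ofNat _).comp hu2
  have hlen : Primrec fun c : ℕ => (Denumerable.ofNat (List ℕ) c.unpair.2).length :=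
    Primrec.list_length.comp hlist
  have hpow0 : Primrec (Nat.unpaired (· ^ ·)) := Primrec.nat_iff.mpr Nat.Primrec.pow
  have hpair2 : Primrec fun c : ℕ => Nat.pair 2 (c.unpair.1 + 1) :=
    Primrec₂.natPair.comp (Primrec.const 2) (Primrec.succ.comp hu1)
  have hpow : Primrec fun c : ℕ => 2 ^ (c.unpair.1 + 1) :=
    (hpow0.comp hpair2).of_eq (fun c => by simp [Nat.unpaired])
  have hpow1 : Primrec fun c : ℕ => 2 ^ (c.unpair.1 + 1) - 1 :=
    Primrec.nat_sub.comp hpow (Primrec.const 1)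
  have hdec1 : Primrec fun c : ℕ =>
      decide ((Denumerable.ofNat (List ℕ) c.unpair.2).length = 2 ^ (c.unpair.1 + 1) - 1) :=
    PrimrecPred.decide (Primrec.eq.comp hlen hpow1)
  have hgd : Primrec fun p : ℕ × (ℕ × Bool) =>
      (Denumerable.ofNat (List ℕ) p.1.unpair.2).getD p.2.1 0 :=
    (Primrec.list_getD 0).comp (hlist.comp Primrec.fst) (Primrec.fst.comp Primrec.snd)
  have hcond : Primrec fun p : ℕ × (ℕ × Bool) =>
      decide ((((Denumerable.ofNat (List ℕ) p.1.unpair.2).getD p.2.1 0).unpair.1 = p.2.1) ∧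
        (((Denumerable.ofNat (List ℕ) p.1.unpair.2).getD p.2.1 0).unpair.2 ∈ elemCodes A)) :=
    PrimrecPred.decide (PrimrecPred.and
      (Primrec.eq.comp (Primrec.fst.comp (Primrec.unpair.comp hgd))
        (Primrec.fst.comp Primrec.snd))
      ((primrec_mem_finset (elemCodes A)).comp (Primrec.snd.comp (Primrec.unpair.comp hgd))))
  have hbody : Primrec fun p : ℕ × (ℕ × Bool) =>
      (decide ((((Denumerable.ofNat (List ℕ) p.1.unpair.2).getD p.2.1 0).unpair.1 = p.2.1) ∧
        (((Denumerable.ofNat (List ℕ) p.1.unpair.2).getD p.2.1 0).unpair.2 ∈ elemCodes A)))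
        && p.2.2 :=
    (Primrec.cond hcond (Primrec.snd.comp Primrec.snd) (Primrec.const false)).of_eq
      (fun p => by cases hd : (decide
        ((((Denumerable.ofNat (List ℕ) p.1.unpair.2).getD p.2.1 0).unpair.1 = p.2.1) ∧
          (((Denumerable.ofNat (List ℕ) p.1.unpair.2).getD p.2.1 0).unpair.2 ∈ elemCodes A)))
        <;> simp [hd])
  have hfold : Primrec fun c : ℕ =>
      (List.range (Denumerable.ofNat (List ℕ) c.unpair.2).length).foldr
        (fun j r =>
          (decide (((Denumerable.ofNat (List ℕ) c.unpair.2).getD j 0).unpair.1 = j ∧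
            ((Denumerable.ofNat (List ℕ) c.unpair.2).getD j 0).unpair.2 ∈ elemCodes A)) && r)
        true :=
    Primrec.list_foldr (Primrec.list_range.comp hlen) (Primrec.const true) hbody.to₂
  have hcnd := Primrec.cond hdec1 hfold (Primrec.const false)
  apply hcnd.of_eq
  intro c
  unfold vB
  by_cases hd : (Denumerable.ofNat (List ℕ) c.unpair.2).length = 2 ^ (c.unpair.1 + 1) - 1
  · simp [hd]
  · simp [hd]

theorem primrec_gN : Primrec gN := by
  have hu1 : Primrec fun c : ℕ => c.unpair.1 := Primrec.fst.comp Primrec.unpair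
  have hu2 : Primrec fun c : ℕ => c.unpair.2 := Primrec.snd.comp Primrec.unpair
  have hlist : Primrec fun c : ℕ => Denumerable.ofNat (List ℕ) c.unpair.2 :=
    (Primrec.ofNat _).comp hu2
  have hx : Primrec fun x : ℕ => Nat.pair x.unpair.1 x.unpair.2.unpair.1 :=
    Primrec₂.natPair.comp (Primrec.fst.comp Primrec.unpair)
      (Primrec.fst.comp (Primrec.unpair.comp (Primrec.snd.comp Primrec.unpair)))
  exact Primrec₂.natPair.comp hu1
    (Primrec.encode.comp (Primrec.list_map hlist (hx.comp Primrec.snd).to₂))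

end Aux4

/-- The dyadic encoding of an effective set of colourings is effective. -/
theorem dyadicImage_isEffective {A : Type} [Fintype A] [DecidableEq A] [Encodable A]
    [Nonempty A] (S : Set ((ℤ × ℤ) → A)) (hS : IsEffective S) :
    IsEffective (DyadicImage S) := by
  obtain ⟨F, hre, hcol⟩ := hS
  refine ⟨LiftF F, ?_, by rw [hcol, dyadic_colourings]⟩
  -- `hre` as a `Partrec` fact
  have hreW : Partrec fun d : ℕ =>
      Part.assert (∃ P ∈ F, Encodable.encode P = d) fun _ => Part.some () := hre
  -- the semi-decision procedure
  have hfpp : Partrec fun c : ℕ =>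
      bif bB A c then Part.some ()
      else bif vB A c then
        Part.assert (∃ P ∈ F, Encodable.encode P = gN c) fun _ => Part.some ()
      else Part.none := by
    apply Partrec.cond primrec_bB.to_comp
    · exact Computable.const ()
    · exact Partrec.cond primrec_vB.to_comp (hreW.comp primrec_gN.to_comp) Partrec.none
  apply hfpp.dom_re.of_eq
  intro c
  -- helper facts
  have hq_of_b : bB A c = true → ∃ P ∈ LiftF F, Encodable.encode P = c := by
    intro hb
    obtain ⟨f, hf, henc⟩ := (bB_iff c).1 hb
    exact ⟨⟨1, f⟩, Or.inl ⟨f, hf, rfl⟩, henc⟩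
  have hq_vW : vB A c = true → (∃ P ∈ F, Encodable.encode P = gN c) →
      ∃ P ∈ LiftF F, Encodable.encode P = c := by
    intro hv hW
    obtain ⟨Q, hQ⟩ := (vB_iff c).1 hv
    obtain ⟨P, hPF, hPe⟩ := hW
    have : gN c = Encodable.encode (projPat Q) := by rw [← hQ, gN_encode]
    rw [this] at hPe
    have hPeq : P = projPat Q := Encodable.encode_injective hPe
    exact ⟨Q, Or.inr (by show projPat Q ∈ F; rw [← hPeq]; exact hPF), hQ⟩
  have hW_of_q : bB A c = false → (∃ P ∈ LiftF F, Encodable.encode P = c) →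
      vB A c = true ∧ (∃ P ∈ F, Encodable.encode P = gN c) := by
    intro hb hq
    obtain ⟨P, hPm, rfl⟩ := hq
    refine ⟨(vB_iff _).2 ⟨P, rfl⟩, ?_⟩
    rcases hPm with hbad | hproj
    · obtain ⟨f, hf, rfl⟩ := hbad
      have : bB A (Encodable.encode (⟨1, f⟩ : Pattern (A × A))) = true :=
        (bB_iff _).2 ⟨f, hf, rfl⟩
      have hb := this.symm.trans hb
      cases hb
    · rw [gN_encode]
      exact ⟨projPat P, hproj, rfl⟩
  have hv_of_q : (∃ P ∈ LiftF F, Encodable.encode P = c) → vB A c = true := by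
    rintro ⟨P, _, rfl⟩
    exact (vB_iff _).2 ⟨P, rfl⟩
  cases hb : bB A c
  · cases hv : vB A c
    · show (Part.none : Part Unit).Dom ↔ _
      constructor
      · intro h; cases h
      · intro hq
        have := hv_of_q hq
        rw [this] at hv
        cases hv
    · show (Part.assert _ _).Dom ↔ _
      constructor
      · intro h
        obtain ⟨hW, -⟩ := h
        exact hq_vW hv hW
      · intro hq
        exact ⟨(hW_of_q hb hq).2, trivial⟩
  · exact iff_of_true trivial (hq_of_b hb)
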